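/- Let L be a real symmetric positive semidefinite N×N matrix, S ⊆ Fin N a set of indices with complement S^c, and let σ_min² denote the smallest eigenvalue of the principal submatrix of L² obtained by keeping only the rows and columns indexed by S^c. Let ω ≥ 0 with ω < σ_min. Then S is a uniqueness set for PW_ω: any vector f ∈ ℝ^N lying in the span of eigenvectors of L with eigenvalues at most ω and satisfying f(u) = 0 for all u ∈ S must be the zero vector. -/

import Mathlib

open Matrix

lemma herm_dot_mulVec {n : Type*} [Fintype n] [DecidableEq n] {A : Matrix n n ℝ}
    (hA : A.IsHermitian) (i : n) (y : n → ℝ) :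
    (hA.eigenvectorBasis i : n → ℝ) ⬝ᵥ (A *ᵥ y)
      = hA.eigenvalues i * ((hA.eigenvectorBasis i : n → ℝ) ⬝ᵥ y) := by
  have hAsymm : Aᵀ = A := by
    rw [← conjTranspose_eq_transpose_of_trivial]; exact hA
  have h1 : (hA.eigenvectorBasis i : n → ℝ) ⬝ᵥ (A *ᵥ y)
      = (A *ᵥ (hA.eigenvectorBasis i : n → ℝ)) ⬝ᵥ y := by
    rw [dotProduct_mulVec, ← mulVec_transpose, hAsymm]
  rw [h1, show (A *ᵥ (hA.eigenvectorBasis i : n → ℝ))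
      = hA.eigenvalues i • (hA.eigenvectorBasis i : n → ℝ) from hA.mulVec_eigenvectorBasis i,
    smul_dotProduct, smul_eq_mul]

lemma quad_eigen_expand {n : Type*} [Fintype n] [DecidableEq n] {A : Matrix n n ℝ}
    (hA : A.IsHermitian) (g : n → ℝ) :
    g ⬝ᵥ (A *ᵥ g) = ∑ i, hA.eigenvalues i * ((hA.eigenvectorBasis i : n → ℝ) ⬝ᵥ g) ^ 2 ∧
      g ⬝ᵥ g = ∑ i, ((hA.eigenvectorBasis i : n → ℝ) ⬝ᵥ g) ^ 2 := by
  have hinner : ∀ x y : EuclideanSpace ℝ n, (inner ℝ x y : ℝ) = x ⬝ᵥ y := by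
    intro x y; simp [PiLp.inner_apply, dotProduct, mul_comm]
  set b := hA.eigenvectorBasis with hb
  constructor
  · have := b.sum_inner_mul_inner (WithLp.toLp 2 g) (WithLp.toLp 2 (A *ᵥ g : n → ℝ))
    rw [hinner] at this
    simp only [WithLp.ofLp_toLp] at this
    rw [← this]
    refine Finset.sum_congr rfl fun i _ => ?_
    rw [hinner, hinner]
    show (g ⬝ᵥ (b i : n → ℝ)) * ((b i : n → ℝ) ⬝ᵥ (A *ᵥ g)) = _
    rw [herm_dot_mulVec hA, dotProduct_comm]
    show _ = hA.eigenvalues i * ((b i : n → ℝ) ⬝ᵥ g) ^ 2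
    ring
  · have := b.sum_inner_mul_inner (WithLp.toLp 2 g) (WithLp.toLp 2 g)
    rw [hinner] at this
    simp only [WithLp.ofLp_toLp] at this
    rw [← this]
    refine Finset.sum_congr rfl fun i _ => ?_
    rw [hinner, hinner]
    show (g ⬝ᵥ (b i : n → ℝ)) * ((b i : n → ℝ) ⬝ᵥ g) = _
    rw [dotProduct_comm]
    show _ = ((b i : n → ℝ) ⬝ᵥ g) ^ 2
    ring

/-- If `L` is a real symmetric positive semidefinite `N×N` matrix,
`σ_min²` is the smallest eigenvalue of the principal submatrix of `L²` indexed by the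
complement of `S`, and `0 ≤ ω < σ_min`, then `S` is a uniqueness set for `PW_ω`: any
vector in the span of eigenvectors of `L` with eigenvalues `≤ ω` that vanishes on `S`
is zero. -/
theorem uniqueness_set_from_smallest_singular_value
    {N : ℕ} (L : Matrix (Fin N) (Fin N) ℝ)
    (hLsymm : L.IsSymm) (hLpsd : L.PosSemidef)
    (S : Finset (Fin N)) (σmin : ℝ) (hσ0 : 0 ≤ σmin)
    (hM : ((L * L).submatrix (Subtype.val : {v : Fin N // v ∈ Sᶜ} → Fin N)
      Subtype.val).IsHermitian)
    (hσ : IsLeast (Set.range hM.eigenvalues) (σmin ^ 2))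
    (ω : ℝ) (hω0 : 0 ≤ ω) (hωσ : ω < σmin)
    (f : Fin N → ℝ)
    (hf : f ∈ Submodule.span ℝ {v : Fin N → ℝ | ∃ c : ℝ, c ≤ ω ∧ L.mulVec v = c • v})
    (hfS : ∀ u ∈ S, f u = 0) :
    f = 0 := by
  classical
  have hL : L.IsHermitian := hLpsd.1
  have hP : (L * L).PosSemidef := by
    have h := posSemidef_conjTranspose_mul_self L
    rwa [show Lᴴ = L from hL] at h
  have hL2 : (L * L).IsHermitian := hP.1
  set b := hL2.eigenvectorBasis with hb
  -- Step A: high-frequency coefficients vanish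
  have key : ∀ i, ω ^ 2 < hL2.eigenvalues i → (b i : Fin N → ℝ) ⬝ᵥ f = 0 := by
    intro i hi
    clear hfS
    induction hf using Submodule.span_induction with
    | mem v hv =>
      obtain ⟨c, hc, hcv⟩ := hv
      by_cases hv0 : v = 0
      · simp [hv0]
      have hvv : 0 < v ⬝ᵥ v := by
        rcases lt_or_eq_of_le (Finset.sum_nonneg fun j _ => mul_self_nonneg (v j)) with h | h
        · exact h
        · exact absurd (dotProduct_self_eq_zero.mp h.symm) hv0
      have hc0 : 0 ≤ c := by
        have h := hLpsd.dotProduct_mulVec_nonneg v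
        rw [show star v = v from rfl, hcv, dotProduct_smul, smul_eq_mul] at h
        nlinarith
      have hc2 : c ^ 2 ≤ ω ^ 2 := pow_le_pow_left₀ hc0 hc 2
      have hLLv : (L * L) *ᵥ v = (c ^ 2) • v := by
        rw [← mulVec_mulVec, hcv, mulVec_smul, hcv, smul_smul]
        ring_nf
      have h1 : hL2.eigenvalues i * ((b i : Fin N → ℝ) ⬝ᵥ v)
          = c ^ 2 * ((b i : Fin N → ℝ) ⬝ᵥ v) := by
        rw [← herm_dot_mulVec hL2 i v, hLLv, dotProduct_smul, smul_eq_mul]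
      have hne : hL2.eigenvalues i ≠ c ^ 2 := by nlinarith
      by_contra hd
      exact hne (mul_right_cancel₀ hd h1)
    | zero => simp
    | add x y hx hy ihx ihy => rw [dotProduct_add, ihx, ihy, add_zero]
    | smul a x hx ihx => rw [dotProduct_smul, ihx, smul_zero]
  -- Step B: upper bound
  obtain ⟨hquad, hnorm⟩ := quad_eigen_expand hL2 f
  have upper : f ⬝ᵥ ((L * L) *ᵥ f) ≤ ω ^ 2 * (f ⬝ᵥ f) := by
    rw [hquad, hnorm, Finset.mul_sum]
    refine Finset.sum_le_sum fun i _ => ?_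
    by_cases hi : ω ^ 2 < hL2.eigenvalues i
    · rw [key i hi]; simp
    · exact mul_le_mul_of_nonneg_right (not_lt.mp hi) (sq_nonneg _)
  -- Step C: lower bound via submatrix
  set M := (L * L).submatrix (Subtype.val : {v : Fin N // v ∈ Sᶜ} → Fin N) Subtype.val with hMdef
  set g : {v : Fin N // v ∈ Sᶜ} → ℝ := fun v => f v.val with hg
  have hfz : ∀ u : Fin N, u ∉ Sᶜ → f u = 0 := by
    intro u hu
    exact hfS u (by simpa using hu)
  have hsum : ∀ h : Fin N → ℝ, (∀ u ∉ Sᶜ, h u = 0) →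
      ∑ v : {v : Fin N // v ∈ Sᶜ}, h v.val = ∑ v, h v := by
    intro h hh
    rw [← Finset.sum_subtype Sᶜ (fun _ => Iff.rfl) h]
    exact Finset.sum_subset (Finset.subset_univ _) fun x _ hx => hh x hx
  have hMg : ∀ v : {v : Fin N // v ∈ Sᶜ}, (M *ᵥ g) v = ((L * L) *ᵥ f) v.val := by
    intro v
    show ∑ w : {v : Fin N // v ∈ Sᶜ}, (L * L) v.val w.val * f w.val = _
    rw [hsum (fun w => (L * L) v.val w * f w) (fun u hu => by simp [hfz u hu])]
    rfl
  have hgMg : g ⬝ᵥ (M *ᵥ g) = f ⬝ᵥ ((L * L) *ᵥ f) := by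
    show ∑ v : {v : Fin N // v ∈ Sᶜ}, f v.val * (M *ᵥ g) v = _
    rw [Finset.sum_congr rfl fun v _ => by rw [hMg v]]
    exact hsum (fun u => f u * ((L * L) *ᵥ f) u) fun u hu => by simp [hfz u hu]
  have hgg : g ⬝ᵥ g = f ⬝ᵥ f :=
    hsum (fun u => f u * f u) fun u hu => by simp [hfz u hu]
  obtain ⟨hquadM, hnormM⟩ := quad_eigen_expand hM g
  have lower : σmin ^ 2 * (g ⬝ᵥ g) ≤ g ⬝ᵥ (M *ᵥ g) := by
    rw [hquadM, hnormM, Finset.mul_sum]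
    refine Finset.sum_le_sum fun i _ => ?_
    exact mul_le_mul_of_nonneg_right (hσ.2 ⟨i, rfl⟩) (sq_nonneg _)
  -- combine
  have hff : 0 ≤ f ⬝ᵥ f := Finset.sum_nonneg fun j _ => mul_self_nonneg (f j)
  have hωσ2 : ω ^ 2 < σmin ^ 2 := by nlinarith
  have : f ⬝ᵥ f = 0 := by
    rw [hgg] at lower
    rw [hgMg] at lower
    nlinarith
  exact dotProduct_self_eq_zero.mp this
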